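/- Along any solution of the full system (X₁, X₂, X₃, Y₁, Y₂, Y₃, W)' = V with V as in the cohomogeneity-one Ricci soliton equation, the quantities satisfy: (Y₂²/(Y₁²W))' = -2·(Y₂²/(Y₁²W))·X₁, (Y₂²/W)' = -2·(Y₂²/W)·X₂, and (Y₂Y₃/W)' = -2·(Y₂Y₃/W)·X₃, wherever Y₁, W > 0. In particular, if X₁, X₂, X₃ ≥ 0 along the solution, then these three positive quantities are non-increasing and hence converge. -/

import Mathlib

/-- Monotone quantities `Y₂²/(Y₁²W)`, `Y₂²/W`, `Y₂Y₃/W` along the full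
cohomogeneity-one Ricci soliton system (Proposition 4.12). -/
theorem stmt_17 (m : ℕ) (ε : ℝ) (X₁ X₂ X₃ Y₁ Y₂ Y₃ W G R₁ R₂ R₃ : ℝ → ℝ)
    (hG : ∀ η, G η = X₁ η ^ 2 + 2 * X₂ η ^ 2 + 4 * m * X₃ η ^ 2)
    (hR₁ : ∀ η, R₁ η = 2 * Y₁ η ^ 2 * Y₂ η ^ 2 + 4 * m * Y₁ η ^ 2 * Y₃ η ^ 2)
    (hR₂ : ∀ η, R₂ η = 4 * Y₂ η ^ 2 - 2 * Y₁ η ^ 2 * Y₂ η ^ 2 + 4 * m * Y₃ η ^ 2)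
    (hR₃ : ∀ η, R₃ η = (4 * m + 8) * Y₂ η * Y₃ η - 2 * Y₁ η ^ 2 * Y₃ η ^ 2
      - 4 * Y₃ η ^ 2)
    (hX₁d : Differentiable ℝ X₁) (hX₂d : Differentiable ℝ X₂)
    (hX₃d : Differentiable ℝ X₃)
    (hY₁d : Differentiable ℝ Y₁) (hY₂d : Differentiable ℝ Y₂)
    (hY₃d : Differentiable ℝ Y₃) (hWd : Differentiable ℝ W)
    (hX₁' : ∀ η, deriv X₁ η = X₁ η * (G η - ε / 2 * W η - 1) + R₁ η + ε / 2 * W η)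
    (hX₂' : ∀ η, deriv X₂ η = X₂ η * (G η - ε / 2 * W η - 1) + R₂ η + ε / 2 * W η)
    (hX₃' : ∀ η, deriv X₃ η = X₃ η * (G η - ε / 2 * W η - 1) + R₃ η + ε / 2 * W η)
    (hY₁' : ∀ η, deriv Y₁ η = Y₁ η * (X₁ η - X₂ η))
    (hY₂' : ∀ η, deriv Y₂ η = Y₂ η * (G η - ε / 2 * W η - X₂ η))
    (hY₃' : ∀ η, deriv Y₃ η = Y₃ η * (G η - ε / 2 * W η + X₂ η - 2 * X₃ η))
    (hW' : ∀ η, deriv W η = 2 * W η * (G η - ε / 2 * W η)) :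
    (∀ η, 0 < Y₁ η → 0 < W η →
      deriv (fun t => Y₂ t ^ 2 / (Y₁ t ^ 2 * W t)) η =
        -2 * (Y₂ η ^ 2 / (Y₁ η ^ 2 * W η)) * X₁ η ∧
      deriv (fun t => Y₂ t ^ 2 / W t) η = -2 * (Y₂ η ^ 2 / W η) * X₂ η ∧
      deriv (fun t => Y₂ t * Y₃ t / W t) η =
        -2 * (Y₂ η * Y₃ η / W η) * X₃ η) ∧
    ((∀ η, 0 < Y₁ η) → (∀ η, 0 < W η) → (∀ η, 0 < Y₂ η) → (∀ η, 0 < Y₃ η) →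
      (∀ η, 0 ≤ X₁ η ∧ 0 ≤ X₂ η ∧ 0 ≤ X₃ η) →
      (Antitone (fun t => Y₂ t ^ 2 / (Y₁ t ^ 2 * W t)) ∧
        Antitone (fun t => Y₂ t ^ 2 / W t) ∧
        Antitone (fun t => Y₂ t * Y₃ t / W t)) ∧
      (∃ L₁, Filter.Tendsto (fun t => Y₂ t ^ 2 / (Y₁ t ^ 2 * W t))
          Filter.atTop (nhds L₁)) ∧
      (∃ L₂, Filter.Tendsto (fun t => Y₂ t ^ 2 / W t) Filter.atTop (nhds L₂)) ∧
      (∃ L₃, Filter.Tendsto (fun t => Y₂ t * Y₃ t / W t)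
          Filter.atTop (nhds L₃))) := by

  -- derivatives of the three quantities at a point where denominators are positive
  have key : ∀ η, 0 < Y₁ η → 0 < W η →
      deriv (fun t => Y₂ t ^ 2 / (Y₁ t ^ 2 * W t)) η =
        -2 * (Y₂ η ^ 2 / (Y₁ η ^ 2 * W η)) * X₁ η ∧
      deriv (fun t => Y₂ t ^ 2 / W t) η = -2 * (Y₂ η ^ 2 / W η) * X₂ η ∧
      deriv (fun t => Y₂ t * Y₃ t / W t) η =
        -2 * (Y₂ η * Y₃ η / W η) * X₃ η := by
    intro η hY₁ hW
    have hY₁ne : Y₁ η ≠ 0 := ne_of_gt hY₁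
    have hWne : W η ≠ 0 := ne_of_gt hW
    have h1 : HasDerivAt Y₁ (Y₁ η * (X₁ η - X₂ η)) η := by
      have := (hY₁d η).hasDerivAt; rwa [hY₁' η] at this
    have h2 : HasDerivAt Y₂ (Y₂ η * (G η - ε / 2 * W η - X₂ η)) η := by
      have := (hY₂d η).hasDerivAt; rwa [hY₂' η] at this
    have h3 : HasDerivAt Y₃ (Y₃ η * (G η - ε / 2 * W η + X₂ η - 2 * X₃ η)) η := by
      have := (hY₃d η).hasDerivAt; rwa [hY₃' η] at this
    have hw : HasDerivAt W (2 * W η * (G η - ε / 2 * W η)) η := by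
      have := (hWd η).hasDerivAt; rwa [hW' η] at this
    have hden : Y₁ η ^ 2 * W η ≠ 0 := by positivity
    refine ⟨?_, ?_, ?_⟩
    · have := ((h2.pow 2).div ((h1.pow 2).mul hw) hden).deriv
      rw [show (fun t => Y₂ t ^ 2 / (Y₁ t ^ 2 * W t)) = Y₂ ^ 2 / (Y₁ ^ 2 * W) from rfl, this]
      simp only [Pi.pow_apply, Pi.mul_apply]; field_simp; ring
    · have := ((h2.pow 2).div hw hWne).deriv
      rw [show (fun t => Y₂ t ^ 2 / W t) = Y₂ ^ 2 / W from rfl, this]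
      simp only [Pi.pow_apply, Pi.mul_apply]; field_simp; ring
    · have := ((h2.mul h3).div hw hWne).deriv
      rw [show (fun t => Y₂ t * Y₃ t / W t) = Y₂ * Y₃ / W from rfl, this]
      simp only [Pi.pow_apply, Pi.mul_apply]; field_simp; ring
  refine ⟨key, ?_⟩
  intro hY₁ hW hY₂ hY₃ hX
  have hY₁ne : ∀ η, Y₁ η ≠ 0 := fun η => ne_of_gt (hY₁ η)
  have hWne : ∀ η, W η ≠ 0 := fun η => ne_of_gt (hW η)
  have hd1 : Differentiable ℝ (fun t => Y₂ t ^ 2 / (Y₁ t ^ 2 * W t)) :=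
    (hY₂d.pow 2).div ((hY₁d.pow 2).mul hWd)
      (fun η => by have := hY₁ η; have := hW η; positivity)
  have hd2 : Differentiable ℝ (fun t => Y₂ t ^ 2 / W t) :=
    (hY₂d.pow 2).div hWd hWne
  have hd3 : Differentiable ℝ (fun t => Y₂ t * Y₃ t / W t) :=
    (hY₂d.mul hY₃d).div hWd hWne
  have hq1 : ∀ η, 0 ≤ Y₂ η ^ 2 / (Y₁ η ^ 2 * W η) := fun η => by
    have := hY₁ η; have := hW η; positivity
  have hq2 : ∀ η, 0 ≤ Y₂ η ^ 2 / W η := fun η => by have := hW η; positivity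
  have hq3 : ∀ η, 0 ≤ Y₂ η * Y₃ η / W η := fun η => by
    have := hY₂ η; have := hY₃ η; have := hW η; positivity
  have ha1 : Antitone (fun t => Y₂ t ^ 2 / (Y₁ t ^ 2 * W t)) := by
    apply antitone_of_deriv_nonpos hd1
    intro η
    rw [(key η (hY₁ η) (hW η)).1]
    have := (hX η).1
    nlinarith [hq1 η]
  have ha2 : Antitone (fun t => Y₂ t ^ 2 / W t) := by
    apply antitone_of_deriv_nonpos hd2
    intro η
    rw [(key η (hY₁ η) (hW η)).2.1]
    have := (hX η).2.1
    nlinarith [hq2 η]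
  have ha3 : Antitone (fun t => Y₂ t * Y₃ t / W t) := by
    apply antitone_of_deriv_nonpos hd3
    intro η
    rw [(key η (hY₁ η) (hW η)).2.2]
    have := (hX η).2.2
    nlinarith [hq3 η]
  have bdd : ∀ (f : ℝ → ℝ), (∀ η, 0 ≤ f η) → BddBelow (Set.range f) := by
    rintro f hf
    exact ⟨0, by rintro y ⟨x, rfl⟩; exact hf x⟩
  exact ⟨⟨ha1, ha2, ha3⟩,
    ⟨_, tendsto_atTop_ciInf ha1 (bdd _ hq1)⟩,
    ⟨_, tendsto_atTop_ciInf ha2 (bdd _ hq2)⟩,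
    ⟨_, tendsto_atTop_ciInf ha3 (bdd _ hq3)⟩⟩
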